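/- Let X ⊆ ℝ² be compact with positive Lebesgue measure, and suppose there is a finite (or countable discrete, uniformly bounded degree) set Z ⊆ ℝ² such that the translates {X+z : z ∈ Z} form an odd cover of ℝ² with (lower) average density ρ. Then for every finite odd-cardinality set K ⊆ ℝ², the Lebesgue measure of the set of points covered an odd number of times by {X+k : k ∈ K} is at least μ(X)/ρ. -/

import Mathlib

open scoped Classical ENNReal
open MeasureTheory Filter

/-- The axis-parallel `n × n` square centered at the origin. -/
def Qsq (n : ℕ) : Set (ℝ × ℝ) :=
  Set.Icc (-(n : ℝ) / 2, -(n : ℝ) / 2) ((n : ℝ) / 2, (n : ℝ) / 2)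

lemma mem_Qsq {n : ℕ} {p : ℝ × ℝ} : p ∈ Qsq n ↔ |p.1| ≤ (n : ℝ)/2 ∧ |p.2| ≤ (n : ℝ)/2 := by
  simp [Qsq, Set.mem_Icc, Prod.le_def, abs_le]
  constructor
  · rintro ⟨⟨a,b⟩,c,e⟩; exact ⟨⟨by linarith, c⟩, by linarith, e⟩
  · rintro ⟨⟨a,b⟩,c,e⟩; exact ⟨⟨by linarith, by linarith⟩, b, e⟩

lemma measurable_Qsq (n : ℕ) : MeasurableSet (Qsq n) := measurableSet_Icc

lemma volume_Qsq (n : ℕ) : volume (Qsq n) = (n : ℝ≥0∞) ^ 2 := by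
  rw [Qsq, show ((-(n : ℝ) / 2, -(n : ℝ) / 2) : ℝ×ℝ) = (Prod.mk (-(n:ℝ)/2) (-(n:ℝ)/2)) from rfl]
  rw [Set.Icc_prod_eq]
  rw [show (volume : Measure (ℝ×ℝ)) = (volume : Measure ℝ).prod volume from rfl]
  rw [Measure.prod_prod, Real.volume_Icc]
  have : ((n:ℝ)/2 - -(n:ℝ)/2) = (n:ℝ) := by ring
  rw [this, sq, ← ENNReal.ofReal_natCast]

lemma exists_mem_Qsq (p : ℝ × ℝ) : ∃ n : ℕ, p ∈ Qsq n := by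
  obtain ⟨n, hn⟩ := exists_nat_ge (2 * (|p.1| + |p.2|))
  refine ⟨n, mem_Qsq.2 ⟨?_, ?_⟩⟩ <;> [skip; skip] <;>
    · have h1 := abs_nonneg p.1
      have h2 := abs_nonneg p.2
      linarith

lemma mem_tr {A : Set (ℝ×ℝ)} {z p : ℝ×ℝ} : p ∈ (fun x => x + z) '' A ↔ p - z ∈ A := by
  constructor
  · rintro ⟨x, hx, rfl⟩; simpa using hx
  · intro h; exact ⟨p - z, h, by ring⟩

lemma tr_meas {A : Set (ℝ×ℝ)} (hA : MeasurableSet A) (z : ℝ×ℝ) :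
    MeasurableSet ((fun x => x + z) '' A) := by
  have : (fun x => x + z) '' A = (fun x : ℝ×ℝ => x - z) ⁻¹' A := by
    ext p; rw [mem_tr]; rfl
  rw [this]
  exact (measurable_sub_const z) hA

lemma tr_vol {A : Set (ℝ×ℝ)} (z : ℝ×ℝ) :
    volume ((fun x => x + z) '' A) = volume A := by
  have : (fun x => x + z) '' A = (fun x : ℝ×ℝ => x + -z) ⁻¹' A := by
    ext p; rw [mem_tr, Set.mem_preimage, sub_eq_add_neg]
  rw [this, measure_preimage_add_right]

lemma tr_subset {A : Set (ℝ×ℝ)} {a b : ℕ} (hA : A ⊆ Qsq a) {z : ℝ×ℝ} (hz : z ∈ Qsq b) :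
    (fun x => x + z) '' A ⊆ Qsq (a + b) := by
  rintro p hp
  obtain ⟨h1, h2⟩ := mem_Qsq.1 (hA (mem_tr.1 hp))
  obtain ⟨h3, h4⟩ := mem_Qsq.1 hz
  have e1 : p.1 = (p - z).1 + z.1 := by simp
  have e2 : p.2 = (p - z).2 + z.2 := by simp
  rw [mem_Qsq, Nat.cast_add]
  constructor
  · rw [e1]; calc |(p-z).1 + z.1| ≤ |(p-z).1| + |z.1| := abs_add_le _ _
      _ ≤ _ := by linarith
  · rw [e2]; calc |(p-z).2 + z.2| ≤ |(p-z).2| + |z.2| := abs_add_le _ _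
      _ ≤ _ := by linarith

lemma count_le (X Z : Set (ℝ×ℝ)) (d : ℕ) (hX : MeasurableSet X)
    (hae : ∀ᵐ p : ℝ×ℝ ∂volume,
      ({z | z ∈ Z ∧ p - z ∈ X}).Finite ∧ Set.ncard {z | z ∈ Z ∧ p - z ∈ X} ≤ d)
    (F : Finset (ℝ×ℝ)) (hF : ↑F ⊆ Z) (B : Set (ℝ×ℝ)) (hB : MeasurableSet B)
    (hFB : ∀ z ∈ F, (fun x => x + z) '' X ⊆ B) :
    (F.card : ℝ≥0∞) * volume X ≤ (d : ℝ≥0∞) * volume B := by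
  have hmeas : ∀ z : ℝ×ℝ, Measurable fun p =>
      ((fun x => x + z) '' X).indicator (fun _ => (1:ℝ≥0∞)) p :=
    fun z => measurable_const.indicator (tr_meas hX z)
  calc (F.card : ℝ≥0∞) * volume X
      = ∑ z ∈ F, volume ((fun x => x + z) '' X) := by
        simp [tr_vol, Finset.sum_const, nsmul_eq_mul]
    _ = ∑ z ∈ F, ∫⁻ p, ((fun x => x + z) '' X).indicator (fun _ => (1:ℝ≥0∞)) p := by
        refine Finset.sum_congr rfl fun z _ => ?_
        rw [lintegral_indicator_const (tr_meas hX z), one_mul]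
    _ = ∫⁻ p, ∑ z ∈ F, ((fun x => x + z) '' X).indicator (fun _ => (1:ℝ≥0∞)) p := by
        rw [lintegral_finset_sum _ (fun z _ => hmeas z)]
    _ ≤ ∫⁻ p, B.indicator (fun _ => (d:ℝ≥0∞)) p := by
        refine lintegral_mono_ae ?_
        filter_upwards [hae] with p hp
        obtain ⟨hfin, hcard⟩ := hp
        by_cases hpB : p ∈ B
        · rw [Set.indicator_of_mem hpB]
          have : ∑ z ∈ F, ((fun x => x + z) '' X).indicator (fun _ => (1:ℝ≥0∞)) p
              = ((F.filter fun z => p - z ∈ X).card : ℝ≥0∞) := by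
            rw [← Finset.sum_boole]
            refine Finset.sum_congr rfl fun z _ => ?_
            simp [Set.indicator_apply, mem_tr, sub_eq_add_neg]
          rw [this]
          have hsub : (↑(F.filter fun z => p - z ∈ X) : Set (ℝ×ℝ)) ⊆ {z | z ∈ Z ∧ p - z ∈ X} := by
            intro z hz
            simp only [Finset.coe_filter, Set.mem_setOf_eq] at hz ⊢
            exact ⟨hF hz.1, hz.2⟩
          have := (Set.ncard_le_ncard hsub hfin).trans hcard
          rw [Set.ncard_coe_finset] at this
          exact_mod_cast this
        · rw [Set.indicator_of_notMem hpB]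
          have : ∑ z ∈ F, ((fun x => x + z) '' X).indicator (fun _ => (1:ℝ≥0∞)) p = 0 := by
            refine Finset.sum_eq_zero fun z hz => ?_
            rw [Set.indicator_of_notMem]
            exact fun hp' => hpB (hFB z hz hp')
          rw [this]
    _ = (d : ℝ≥0∞) * volume B := lintegral_indicator_const hB _

lemma Z_box_finite (X Z : Set (ℝ×ℝ)) (d : ℕ) (hX : MeasurableSet X)
    (hXpos : 0 < volume X) (hXfin : volume X ≠ ⊤)
    (RX : ℕ) (hRX : X ⊆ Qsq RX)
    (hae : ∀ᵐ p : ℝ×ℝ ∂volume,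
      ({z | z ∈ Z ∧ p - z ∈ X}).Finite ∧ Set.ncard {z | z ∈ Z ∧ p - z ∈ X} ≤ d)
    (m : ℕ) : ({z | z ∈ Z ∧ z ∈ Qsq m}).Finite := by
  by_contra hinf
  rw [← Set.not_infinite, not_not] at hinf
  have hBfin : (d : ℝ≥0∞) * volume (Qsq (RX + m)) ≠ ⊤ := by
    rw [volume_Qsq]
    exact ENNReal.mul_ne_top (by simp) (by simp [ENNReal.pow_ne_top])
  obtain ⟨N, hN⟩ := ENNReal.exists_nat_gt
    (ENNReal.div_lt_top hBfin hXpos.ne').ne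
  have hlt : (d : ℝ≥0∞) * volume (Qsq (RX + m)) < N * volume X := by
    rwa [ENNReal.div_lt_iff (Or.inl hXpos.ne') (Or.inl hXfin)] at hN
  obtain ⟨F, hFsub, hFcard⟩ := hinf.exists_subset_card_eq N
  have := count_le X Z d hX hae F (fun z hz => (hFsub hz).1) (Qsq (RX + m)) (measurable_Qsq _)
    (fun z hz => tr_subset hRX (hFsub hz).2)
  rw [hFcard] at this
  exact absurd this (not_le.2 hlt)

lemma Z_countable (X Z : Set (ℝ×ℝ)) (d : ℕ) (hX : MeasurableSet X)
    (hXpos : 0 < volume X) (hXfin : volume X ≠ ⊤)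
    (RX : ℕ) (hRX : X ⊆ Qsq RX)
    (hae : ∀ᵐ p : ℝ×ℝ ∂volume,
      ({z | z ∈ Z ∧ p - z ∈ X}).Finite ∧ Set.ncard {z | z ∈ Z ∧ p - z ∈ X} ≤ d) :
    Z.Countable := by
  have : Z ⊆ ⋃ m : ℕ, {z | z ∈ Z ∧ z ∈ Qsq m} := by
    intro z hz
    obtain ⟨m, hm⟩ := exists_mem_Qsq z
    exact Set.mem_iUnion.2 ⟨m, hz, hm⟩
  exact Set.Countable.mono this
    (Set.countable_iUnion fun m => (Z_box_finite X Z d hX hXpos hXfin RX hRX hae m).countable)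

lemma lower_bound (Z : Set (ℝ×ℝ)) (hZc : Z.Countable) (A : Set (ℝ×ℝ))
    (hcov : ∀ᵐ p : ℝ×ℝ ∂volume, ∃ z ∈ Z, p - z ∈ A) (n : ℕ) :
    (n:ℝ≥0∞)^2 ≤ ∑' z : Z, volume (Qsq n ∩ (fun x => x + (z : ℝ×ℝ)) '' A) := by
  haveI := hZc.to_subtype
  calc (n:ℝ≥0∞)^2 = volume (Qsq n) := (volume_Qsq n).symm
    _ ≤ volume (⋃ z : Z, Qsq n ∩ (fun x => x + (z : ℝ×ℝ)) '' A) := by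
        refine measure_mono_ae ?_
        filter_upwards [hcov] with p hp
        intro hpQ
        obtain ⟨z, hzZ, hzA⟩ := hp
        exact Set.mem_iUnion.2 ⟨⟨z, hzZ⟩, hpQ, mem_tr.2 hzA⟩
    _ ≤ ∑' z : Z, volume (Qsq n ∩ (fun x => x + (z : ℝ×ℝ)) '' A) := measure_iUnion_le _

lemma parity_lemma (X Z : Set (ℝ×ℝ)) (K : Finset (ℝ×ℝ)) (hK : Odd K.card) (p : ℝ×ℝ)
    (h : ∀ k ∈ K, Odd (Set.ncard {z | z ∈ Z ∧ (p - k) - z ∈ X})) :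
    ∃ z ∈ Z, Odd ((K.filter fun k => (p - z) - k ∈ X).card) := by
  have hfin : ∀ k ∈ K, ({z | z ∈ Z ∧ (p - k) - z ∈ X}).Finite := by
    intro k hk
    by_contra hc
    rw [← Set.not_infinite, not_not] at hc
    have := h k hk
    rw [hc.ncard] at this
    simp at this
  by_contra hcon
  push_neg at hcon
  have heven : ∀ z ∈ Z, Even ((K.filter fun k => (p - z) - k ∈ X).card) := by
    intro z hz
    exact Nat.not_odd_iff_even.1 (hcon z hz)
  set T0 : Finset (ℝ×ℝ) := K.attach.biUnion (fun k => (hfin k.1 k.2).toFinset) with hT0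
  have hT0Z : ∀ z ∈ T0, z ∈ Z := by
    intro z hz
    obtain ⟨k, _, hk2⟩ := Finset.mem_biUnion.1 hz
    exact ((hfin k.1 k.2).mem_toFinset.1 hk2).1
  have hSodd : Odd (∑ k ∈ K.attach, ((hfin k.1 k.2).toFinset).card) := by
    rw [Nat.odd_iff, Finset.sum_nat_mod]
    have : ∀ k ∈ K.attach, ((hfin k.1 k.2).toFinset).card % 2 = 1 := by
      intro k _
      rw [← Nat.odd_iff, ← Set.ncard_eq_toFinset_card _ (hfin k.1 k.2)]
      exact h k.1 k.2
    rw [Finset.sum_congr rfl this, Finset.sum_const, smul_eq_mul, mul_one,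
      Finset.card_attach, ← Nat.odd_iff]
    exact hK
  have hcardeq : ∀ k : {x // x ∈ K}, ((hfin k.1 k.2).toFinset)
      = T0.filter (fun z => (p - k.1) - z ∈ X) := by
    intro k
    ext z
    simp only [Finset.mem_filter, Set.Finite.mem_toFinset, Set.mem_setOf_eq]
    constructor
    · intro hzk
      refine ⟨Finset.mem_biUnion.2 ⟨k, Finset.mem_attach _ _, ?_⟩, hzk.2⟩
      exact (hfin k.1 k.2).mem_toFinset.2 hzk
    · intro ⟨hz0, hzX⟩
      exact ⟨hT0Z z hz0, hzX⟩
  have hSeven : Even (∑ k ∈ K.attach, ((hfin k.1 k.2).toFinset).card) := by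
    have hswap : (∑ k ∈ K.attach, ((hfin k.1 k.2).toFinset).card)
        = ∑ z ∈ T0, (K.filter fun k => (p - z) - k ∈ X).card := by
      calc (∑ k ∈ K.attach, ((hfin k.1 k.2).toFinset).card)
          = ∑ k ∈ K.attach, ∑ z ∈ T0, (if (p - k.1) - z ∈ X then 1 else 0) := by
            refine Finset.sum_congr rfl fun k _ => ?_
            rw [hcardeq k, Finset.card_filter]
        _ = ∑ z ∈ T0, ∑ k ∈ K.attach, (if (p - k.1) - z ∈ X then 1 else 0) :=
            Finset.sum_comm
        _ = ∑ z ∈ T0, (K.filter fun k => (p - z) - k ∈ X).card := by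
            refine Finset.sum_congr rfl fun z _ => ?_
            rw [Finset.sum_attach K (fun k => if (p - k) - z ∈ X then 1 else 0),
              Finset.card_filter]
            refine Finset.sum_congr rfl fun k _ => ?_
            rw [sub_right_comm]
    rw [hswap, Nat.even_iff, Finset.sum_nat_mod]
    have : ∀ z ∈ T0, (K.filter fun k => (p - z) - k ∈ X).card % 2 = 0 := by
      intro z hz
      exact Nat.even_iff.1 (heven z (hT0Z z hz))
    rw [Finset.sum_congr rfl this, Finset.sum_const, smul_eq_mul, mul_zero]
    simp
  exact (Nat.not_odd_iff_even.2 hSeven) hSodd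

lemma bounded_subset_Qsq {s : Set (ℝ×ℝ)} (hs : Bornology.IsBounded s) :
    ∃ R : ℕ, s ⊆ Qsq R := by
  obtain ⟨r, hr⟩ := hs.subset_closedBall 0
  obtain ⟨R, hR⟩ := exists_nat_ge (2 * r)
  refine ⟨R, fun p hp => ?_⟩
  have := hr hp
  rw [Metric.mem_closedBall, Prod.dist_eq] at this
  have h1 : |p.1| ≤ r := by
    have := le_trans (le_max_left (dist p.1 0) (dist p.2 0)) this
    rwa [Real.dist_eq, sub_zero] at this
  have h2 : |p.2| ≤ r := by
    have := le_trans (le_max_right (dist p.1 0) (dist p.2 0)) this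
    rwa [Real.dist_eq, sub_zero] at this
  exact mem_Qsq.2 ⟨by linarith, by linarith⟩

theorem odd_cover_lemma (X : Set (ℝ × ℝ)) (hXc : IsCompact X) (hXpos : 0 < volume X)
    (Z : Set (ℝ × ℝ)) (d : ℕ)
    (hbd : ∀ p : ℝ × ℝ, Set.ncard {z | z ∈ Z ∧ p - z ∈ X} ≤ d)
    (hodd : ∀ᵐ p : ℝ × ℝ ∂volume, Odd (Set.ncard {z | z ∈ Z ∧ p - z ∈ X}))
    (ρ : ℝ≥0∞)
    (hρ : ρ = liminf (fun n : ℕ =>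
      (∑' z : Z, volume (Qsq n ∩ ((fun x => x + (z : ℝ × ℝ)) '' X))) / (n : ℝ≥0∞) ^ 2) atTop)
    (K : Finset (ℝ × ℝ)) (hK : Odd K.card) :
    volume X / ρ ≤ volume {p : ℝ × ℝ | Odd ((K.filter (fun k => p - k ∈ X)).card)} := by
  set Y : Set (ℝ × ℝ) := {p : ℝ × ℝ | Odd ((K.filter (fun k => p - k ∈ X)).card)} with hYdef
  set S : ℕ → ℝ≥0∞ :=
    fun m => ∑' z : Z, volume (Qsq m ∩ ((fun x => x + (z : ℝ × ℝ)) '' X)) with hSdef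
  have hXmeas : MeasurableSet X := hXc.measurableSet
  have hXfin : volume X ≠ ⊤ := hXc.measure_lt_top.ne
  obtain ⟨RX, hRX⟩ := bounded_subset_Qsq hXc.isBounded
  obtain ⟨RK, hRK⟩ := bounded_subset_Qsq K.finite_toSet.isBounded
  -- the a.e. multiplicity bound
  have hae : ∀ᵐ p : ℝ×ℝ ∂volume,
      ({z | z ∈ Z ∧ p - z ∈ X}).Finite ∧ Set.ncard {z | z ∈ Z ∧ p - z ∈ X} ≤ d := by
    filter_upwards [hodd] with p hp
    refine ⟨?_, hbd p⟩
    by_contra hc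
    rw [← Set.not_infinite, not_not] at hc
    rw [hc.ncard] at hp
    simp at hp
  have hZc : Z.Countable := Z_countable X Z d hXmeas hXpos hXfin RX hRX hae
  -- Y is measurable
  have hYmeas : MeasurableSet Y := by
    have hm : Measurable fun p : ℝ×ℝ => (K.filter (fun k => p - k ∈ X)).card := by
      have : (fun p : ℝ×ℝ => (K.filter (fun k => p - k ∈ X)).card)
          = fun p => ∑ k ∈ K, if p - k ∈ X then 1 else 0 := by
        funext p; rw [Finset.card_filter]
      rw [this]
      refine Finset.measurable_sum K fun k _ => Measurable.ite ?_ measurable_const measurable_const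
      exact (measurable_sub_const k) hXmeas
    exact hm (MeasurableSet.of_discrete (s := {n : ℕ | Odd n}))
  -- Y is bounded
  set RY : ℕ := RX + RK with hRYdef
  have hYsub : Y ⊆ Qsq RY := by
    intro p hp
    have hp' : (K.filter (fun k => p - k ∈ X)).Nonempty := by
      rw [Finset.nonempty_iff_ne_empty]
      intro hemp
      have : Odd ((K.filter (fun k => p - k ∈ X)).card) := hp
      rw [hemp] at this
      simp at this
    obtain ⟨k, hk⟩ := hp'
    rw [Finset.mem_filter] at hk
    exact tr_subset hRX (hRK hk.1) (mem_tr.2 hk.2)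
  have hYfin : volume Y ≠ ⊤ := by
    refine ne_top_of_le_ne_top ?_ (measure_mono hYsub)
    rw [volume_Qsq]
    simp [ENNReal.pow_ne_top]
  -- a.e. covering of the plane by Y-translates
  have hcovY : ∀ᵐ p : ℝ×ℝ ∂volume, ∃ z ∈ Z, p - z ∈ Y := by
    have haeK : ∀ᵐ p : ℝ×ℝ ∂volume, ∀ k ∈ (↑K : Set (ℝ×ℝ)),
        Odd (Set.ncard {z | z ∈ Z ∧ (p - k) - z ∈ X}) := by
      rw [ae_ball_iff K.countable_toSet]
      intro k _
      rw [ae_iff]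
      have : {p : ℝ×ℝ | ¬ Odd (Set.ncard {z | z ∈ Z ∧ (p - k) - z ∈ X})}
          = (fun p : ℝ×ℝ => p + (-k)) ⁻¹' {q : ℝ×ℝ | ¬ Odd (Set.ncard {z | z ∈ Z ∧ q - z ∈ X})} := by
        ext p; simp [sub_eq_add_neg]
      rw [this, measure_preimage_add_right, ← ae_iff]
      exact hodd
    filter_upwards [haeK] with p hp
    exact parity_lemma X Z K hK p (fun k hk => hp k (Finset.mem_coe.2 hk))
  -- the key inequality for each n
  set C : ℕ := RX + RY with hCdef
  have In1 : ∀ n : ℕ, (n:ℝ≥0∞)^2 * volume X ≤ S (n + C) * volume Y := by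
    intro n
    have hFnfin := Z_box_finite X Z d hXmeas hXpos hXfin RX hRX hae (n + RY)
    set Fn : Finset (ℝ×ℝ) := hFnfin.toFinset with hFndef
    have hFnmem : ∀ z, z ∈ Fn ↔ z ∈ Z ∧ z ∈ Qsq (n + RY) := fun z => hFnfin.mem_toFinset
    set Fn' : Finset ↥Z := Fn.subtype (· ∈ Z) with hFn'def
    have hmemFn' : ∀ z : ↥Z, z ∈ Fn' ↔ (z:ℝ×ℝ) ∈ Fn := by
      intro z; simp [hFn'def, Finset.mem_subtype, z.2]
    have ha := lower_bound Z hZc Y hcovY n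
    have hb : (∑' z : Z, volume (Qsq n ∩ (fun x => x + (z:ℝ×ℝ)) '' Y))
        ≤ (Fn.card : ℝ≥0∞) * volume Y := by
      have hzero : ∀ z : ↥Z, z ∉ Fn' →
          volume (Qsq n ∩ (fun x => x + (z:ℝ×ℝ)) '' Y) = 0 := by
        intro z hz
        by_contra h0
        obtain ⟨q, hq1, hq2⟩ := nonempty_of_measure_ne_zero h0
        apply hz
        rw [hmemFn', hFnmem]
        refine ⟨z.2, ?_⟩
        have hy : q - (z:ℝ×ℝ) ∈ Qsq RY := hYsub (mem_tr.1 hq2)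
        obtain ⟨a1, a2⟩ := mem_Qsq.1 hq1
        obtain ⟨b1, b2⟩ := mem_Qsq.1 hy
        rw [mem_Qsq, Nat.cast_add]
        constructor
        · have h' : ((z:ℝ×ℝ)).1 = q.1 - (q - (z:ℝ×ℝ)).1 := by simp
          rw [h']
          calc |q.1 - (q - (z:ℝ×ℝ)).1| ≤ |q.1| + |(q - (z:ℝ×ℝ)).1| := abs_sub _ _
            _ ≤ _ := by linarith
        · have h' : ((z:ℝ×ℝ)).2 = q.2 - (q - (z:ℝ×ℝ)).2 := by simp
          rw [h']
          calc |q.2 - (q - (z:ℝ×ℝ)).2| ≤ |q.2| + |(q - (z:ℝ×ℝ)).2| := abs_sub _ _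
            _ ≤ _ := by linarith
      calc (∑' z : Z, volume (Qsq n ∩ (fun x => x + (z:ℝ×ℝ)) '' Y))
          = ∑ z ∈ Fn', volume (Qsq n ∩ (fun x => x + (z:ℝ×ℝ)) '' Y) := tsum_eq_sum hzero
        _ ≤ ∑ _z ∈ Fn', volume Y := by
            refine Finset.sum_le_sum fun z _ => ?_
            calc volume (Qsq n ∩ (fun x => x + (z:ℝ×ℝ)) '' Y)
                ≤ volume ((fun x => x + (z:ℝ×ℝ)) '' Y) := measure_mono Set.inter_subset_right
              _ = volume Y := tr_vol _
        _ = (Fn'.card : ℝ≥0∞) * volume Y := by rw [Finset.sum_const, nsmul_eq_mul]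
        _ ≤ (Fn.card : ℝ≥0∞) * volume Y := by
            refine mul_le_mul_left ?_ _
            refine Nat.cast_le.2 ?_
            rw [hFn'def, Finset.card_subtype]
            exact Finset.card_filter_le _ _
    have hc : (Fn.card : ℝ≥0∞) * volume X ≤ S (n + C) := by
      have hsub2 : ∀ z ∈ Fn, (fun x => x + z) '' X ⊆ Qsq (n + C) := by
        intro z hz
        have h' := tr_subset hRX ((hFnmem z).1 hz).2
        rwa [show RX + (n + RY) = n + C by omega] at h'
      calc (Fn.card : ℝ≥0∞) * volume X
          = ∑ z ∈ Fn, volume (Qsq (n+C) ∩ (fun x => x + z) '' X) := by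
            rw [Finset.sum_congr rfl (fun z hz => by
              rw [Set.inter_eq_self_of_subset_right (hsub2 z hz), tr_vol]),
              Finset.sum_const, nsmul_eq_mul]
        _ = ∑ z ∈ Fn', volume (Qsq (n+C) ∩ (fun x => x + (z:ℝ×ℝ)) '' X) :=
            (Finset.sum_subtype_of_mem _ (fun z hz => ((hFnmem z).1 hz).1)).symm
        _ ≤ S (n + C) := ENNReal.sum_le_tsum Fn'
    calc (n:ℝ≥0∞)^2 * volume X ≤ ((Fn.card:ℝ≥0∞) * volume Y) * volume X :=
          mul_le_mul_left (ha.trans hb) _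
      _ = ((Fn.card:ℝ≥0∞) * volume X) * volume Y := by ring
      _ ≤ S (n + C) * volume Y := mul_le_mul_left hc _
  -- ρ ≥ 1
  have hcovX : ∀ᵐ p : ℝ×ℝ ∂volume, ∃ z ∈ Z, p - z ∈ X := by
    filter_upwards [hodd] with p hp
    have hne : {z | z ∈ Z ∧ p - z ∈ X}.Nonempty := by
      rw [Set.nonempty_iff_ne_empty]
      intro h
      rw [h] at hp
      simp [Set.ncard_empty] at hp
    obtain ⟨z, hz⟩ := hne
    exact ⟨z, hz.1, hz.2⟩
  have hρ1 : 1 ≤ ρ := by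
    rw [hρ]
    refine le_liminf_of_le (by isBoundedDefault) ?_
    filter_upwards [eventually_ge_atTop 1] with n hn
    have hl := lower_bound Z hZc X hcovX n
    have hn0 : ((n:ℝ≥0∞))^2 ≠ 0 := pow_ne_zero _ (Nat.cast_ne_zero.2 (by omega))
    have hnT : ((n:ℝ≥0∞))^2 ≠ ⊤ := by simp
    rw [ENNReal.le_div_iff_mul_le (Or.inl hn0) (Or.inl hnT), one_mul]
    exact hl
  have hρ0 : ρ ≠ 0 := by intro h; rw [h] at hρ1; simp at hρ1
  -- conclusion
  rcases eq_or_ne ρ ⊤ with hT | hT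
  · simp [hT]
  rw [ENNReal.div_le_iff_le_mul (Or.inl hρ0) (Or.inl hT)]
  -- goal : volume X ≤ volume Y * ρ
  have key : ∀ j : ℕ, 1 ≤ j →
      volume X ≤ (1 + ((j:ℝ≥0∞))⁻¹)^3 * (ρ * volume Y) := by
    intro j hj
    set e : ℝ≥0∞ := ((j:ℝ≥0∞))⁻¹ with hedef
    have hjne0 : (j:ℝ≥0∞) ≠ 0 := Nat.cast_ne_zero.2 (by omega)
    have he0 : e ≠ 0 := ENNReal.inv_ne_zero.2 (ENNReal.natCast_ne_top j)
    have hlt : ρ < (1+e) * ρ := by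
      rw [add_mul, one_mul]
      exact ENNReal.lt_add_right hT (mul_ne_zero he0 hρ0)
    have hfreq : ∃ᶠ m in atTop,
        S m / (m:ℝ≥0∞)^2 < (1+e)*ρ := by
      refine frequently_lt_of_liminf_lt (by isBoundedDefault) ?_
      rw [← hρ]
      exact hlt
    obtain ⟨m, hm1, hm2⟩ := (hfreq.and_eventually (eventually_ge_atTop (C*j + C + 1))).exists
    set n : ℕ := m - C with hndef
    have hmn : m = n + C := by omega
    have hnCj : C * j ≤ n := by omega
    have hn2ne0 : ((n:ℝ≥0∞))^2 ≠ 0 := pow_ne_zero _ (Nat.cast_ne_zero.2 (by omega))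
    have hn2neT : ((n:ℝ≥0∞))^2 ≠ ⊤ := by simp
    have hm2ne0 : ((m:ℝ≥0∞))^2 ≠ 0 := pow_ne_zero _ (Nat.cast_ne_zero.2 (by omega))
    have hm2neT : ((m:ℝ≥0∞))^2 ≠ ⊤ := by simp
    have hSm : S m = S m / (m:ℝ≥0∞)^2 * (m:ℝ≥0∞)^2 :=
      (ENNReal.div_mul_cancel hm2ne0 hm2neT).symm
    have hmle : (m:ℝ≥0∞) ≤ (n:ℝ≥0∞) * (1+e) := by
      have h1 : (C:ℝ≥0∞) ≤ (n:ℝ≥0∞) * e := by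
        have h2 : ((C*j:ℕ):ℝ≥0∞) ≤ (n:ℝ≥0∞) := Nat.cast_le.2 hnCj
        calc (C:ℝ≥0∞) = (C:ℝ≥0∞) * ((j:ℝ≥0∞) * e) := by
              rw [hedef, ENNReal.mul_inv_cancel hjne0 (ENNReal.natCast_ne_top j), mul_one]
          _ = ((C*j:ℕ):ℝ≥0∞) * e := by push_cast; ring
          _ ≤ (n:ℝ≥0∞) * e := mul_le_mul_left h2 e
      calc (m:ℝ≥0∞) = (n:ℝ≥0∞) + (C:ℝ≥0∞) := by rw [hmn]; push_cast; ring
        _ ≤ (n:ℝ≥0∞) + (n:ℝ≥0∞)*e := add_le_add_right h1 _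
        _ = (n:ℝ≥0∞) * (1+e) := by ring
    have hmsq : ((m:ℝ≥0∞))^2 ≤ ((n:ℝ≥0∞))^2 * (1+e)^2 := by
      calc ((m:ℝ≥0∞))^2 ≤ ((n:ℝ≥0∞) * (1+e))^2 := pow_le_pow_left₀ zero_le hmle 2
        _ = _ := by ring
    have hkey := In1 n
    rw [← hmn] at hkey
    have hfinal : ((n:ℝ≥0∞))^2 * volume X
        ≤ ((n:ℝ≥0∞))^2 * ((1+e)^3 * (ρ * volume Y)) := by
      calc ((n:ℝ≥0∞))^2 * volume X ≤ S m * volume Y := hkey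
        _ = S m / (m:ℝ≥0∞)^2 * (m:ℝ≥0∞)^2 * volume Y := by rw [← hSm]
        _ ≤ (1+e)*ρ * (m:ℝ≥0∞)^2 * volume Y := by
            exact mul_le_mul_left (mul_le_mul_left hm1.le _) _
        _ ≤ (1+e)*ρ * (((n:ℝ≥0∞))^2 * (1+e)^2) * volume Y := by
            exact mul_le_mul_left (mul_le_mul_right hmsq _) _
        _ = ((n:ℝ≥0∞))^2 * ((1+e)^3 * (ρ * volume Y)) := by ring
    exact (ENNReal.mul_le_mul_iff_right hn2ne0 hn2neT).1 hfinal
  refine ENNReal.le_of_forall_pos_le_add fun ε hε hfin2 => ?_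
  set c : ℝ≥0∞ := ρ * volume Y with hcdef
  have hcfin : c ≠ ⊤ := ENNReal.mul_ne_top hT hYfin
  have hd7 : (7:ℝ≥0∞) * c ≠ ⊤ := ENNReal.mul_ne_top (by simp) hcfin
  have hεne0 : (ε:ℝ≥0∞) ≠ 0 := by exact_mod_cast hε.ne'
  have hεneT : (ε:ℝ≥0∞) ≠ ⊤ := ENNReal.coe_ne_top
  obtain ⟨j, hj⟩ := ENNReal.exists_nat_gt (ENNReal.div_lt_top hd7 hεne0).ne
  have hj1 : 1 ≤ j := by
    by_contra h
    interval_cases j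
    simp at hj
  set e : ℝ≥0∞ := ((j:ℝ≥0∞))⁻¹ with hedef
  have hjne0 : (j:ℝ≥0∞) ≠ 0 := Nat.cast_ne_zero.2 (by omega)
  have h7 : 7 * c * e ≤ (ε:ℝ≥0∞) := by
    rw [ENNReal.div_lt_iff (Or.inl hεne0) (Or.inl hεneT)] at hj
    calc 7 * c * e ≤ ((j:ℝ≥0∞) * ε) * e := mul_le_mul_left hj.le e
      _ = (ε:ℝ≥0∞) * ((j:ℝ≥0∞) * e) := by ring
      _ = (ε:ℝ≥0∞) := by
          rw [hedef, ENNReal.mul_inv_cancel hjne0 (ENNReal.natCast_ne_top j), mul_one]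
  have he1 : e ≤ 1 := by
    rw [hedef, ENNReal.inv_le_one]
    exact_mod_cast hj1
  have hexp : (1+e)^3 ≤ 1 + 7*e := by
    have hx : (1+e)^3 = 1 + 3*e + 3*e^2 + e^3 := by ring
    rw [hx]
    have h2 : e^2 ≤ e := by
      calc e^2 = e*e := sq e
        _ ≤ 1*e := mul_le_mul_left he1 e
        _ = e := one_mul e
    have h3 : e^3 ≤ e := by
      calc e^3 = e^2*e := by ring
        _ ≤ 1*e := mul_le_mul_left (h2.trans he1) e
        _ = e := one_mul e
    calc 1 + 3*e + 3*e^2 + e^3 ≤ 1 + 3*e + 3*e + e := by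
          refine add_le_add (add_le_add le_rfl ?_) h3
          exact mul_le_mul_right h2 3
      _ = 1 + 7*e := by ring
  calc volume X ≤ (1+e)^3 * c := key j hj1
    _ ≤ (1 + 7*e) * c := mul_le_mul_left hexp c
    _ = c + 7*c*e := by ring
    _ ≤ c + (ε:ℝ≥0∞) := add_le_add_right h7 c
    _ = volume Y * ρ + (ε:ℝ≥0∞) := by rw [hcdef, mul_comm]
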